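/- arXiv:math/0701247 — 3 statements merged into one kernel-verified Lean document; each statement's English description precedes it below -/
import Mathlib

section
/- For every integer i ≥ 1, the denominator of the Bernoulli number B_{2i} (written in lowest terms) equals the product of all primes p such that p − 1 divides 2i. In particular, this denominator is squarefree. -/
open Finset



def PI (p : ℕ) (x : ℚ) : Prop := ∃ a b : ℤ, ¬ (p:ℤ) ∣ b ∧ x = a / b

theorem PI_intCast (p : ℕ) (hp : p ≠ 1) (z : ℤ) : PI p z :=
  ⟨z, 1, by simpa using fun h => hp (by exact_mod_cast Int.eq_one_of_dvd_one (by norm_num) h), by simp⟩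

theorem PI.bne {p : ℕ} {b : ℤ} (h : ¬ (p:ℤ) ∣ b) : b ≠ 0 := by
  rintro rfl; exact h (dvd_zero _)

theorem PI.add {p : ℕ} (hp : p.Prime) {x y : ℚ} (hx : PI p x) (hy : PI p y) : PI p (x + y) := by
  obtain ⟨a1, b1, h1, rfl⟩ := hx
  obtain ⟨a2, b2, h2, rfl⟩ := hy
  refine ⟨a1 * b2 + a2 * b1, b1 * b2, ?_, ?_⟩
  · intro h
    rcases (Int.Prime.dvd_mul' (by exact_mod_cast hp) h) with h | h
    exacts [h1 h, h2 h]
  · have hb1 : (b1 : ℚ) ≠ 0 := Int.cast_ne_zero.2 (PI.bne h1)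
    have hb2 : (b2 : ℚ) ≠ 0 := Int.cast_ne_zero.2 (PI.bne h2)
    push_cast
    rw [div_add_div _ _ hb1 hb2]; ring_nf

theorem PI.mul {p : ℕ} (hp : p.Prime) {x y : ℚ} (hx : PI p x) (hy : PI p y) : PI p (x * y) := by
  obtain ⟨a1, b1, h1, rfl⟩ := hx
  obtain ⟨a2, b2, h2, rfl⟩ := hy
  refine ⟨a1 * a2, b1 * b2, ?_, ?_⟩
  · intro h
    rcases (Int.Prime.dvd_mul' (by exact_mod_cast hp) h) with h | h
    exacts [h1 h, h2 h]
  · push_cast; rw [div_mul_div_comm]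

theorem PI.neg {p : ℕ} {x : ℚ} (hx : PI p x) : PI p (-x) := by
  obtain ⟨a, b, h, rfl⟩ := hx
  exact ⟨-a, b, h, by push_cast; ring⟩

theorem PI.sum {p : ℕ} (hp : p.Prime) {s : Finset ℕ} {f : ℕ → ℚ}
    (h : ∀ j ∈ s, PI p (f j)) : PI p (∑ j ∈ s, f j) := by
  classical
  induction s using Finset.induction with
  | empty => simpa using PI_intCast p hp.ne_one 0
  | insert _ _ hj ih =>
    rw [Finset.sum_insert hj]
    exact PI.add hp (h _ (Finset.mem_insert_self _ _)) (ih fun j hjs => h j (Finset.mem_insert_of_mem hjs))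

theorem PI_iff_not_dvd_den {p : ℕ} (hp : p.Prime) (x : ℚ) : PI p x ↔ ¬ p ∣ x.den := by
  constructor
  · rintro ⟨a, b, hb, rfl⟩ hden
    have hdvd : (((a : ℚ) / b).den : ℤ) ∣ b := by
      simpa [Rat.divInt_eq_div] using Rat.den_dvd a b
    exact hb (dvd_trans (Int.natCast_dvd_natCast.2 hden) hdvd)
  · intro h
    refine ⟨x.num, x.den, ?_, (Rat.num_div_den x).symm⟩
    exact_mod_cast fun hd => h (Int.ofNat_dvd.mp hd)

theorem two_pow_aux (k : ℕ) (hk : 2 ≤ k) : k + 2 ≤ 2^k := by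
  induction k with
  | zero => omega
  | succ n ih =>
    rcases Nat.lt_or_ge n 2 with h | h
    · interval_cases n
      · omega
      · norm_num
    · have := ih h; rw [pow_succ]; omega

theorem pow_div_m (p : ℕ) (hp : p.Prime) (m : ℕ) (hm : 2 ≤ m) (e : ℕ)
    (he : m.factorization p + e ≤ m) :
    ∃ w : ℚ, PI p w ∧ (p : ℚ) ^ m / m = p ^ e * w := by
  set k := m.factorization p with hk
  have hm0 : m ≠ 0 := by omega
  have hmm : p ^ k * (m / p ^ k) = m := Nat.ordProj_mul_ordCompl_eq_self m p
  have hnd : ¬ p ∣ m / p ^ k := Nat.not_dvd_ordCompl hp hm0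
  have hm'ne : m / p ^ k ≠ 0 := fun h => hnd (h ▸ dvd_zero p)
  have hm'0 : ((m / p ^ k : ℕ) : ℚ) ≠ 0 := Nat.cast_ne_zero.2 hm'ne
  have hp0 : (p : ℚ) ≠ 0 := Nat.cast_ne_zero.2 hp.ne_zero
  refine ⟨(p : ℚ) ^ (m - k - e) / ((m / p ^ k : ℕ) : ℚ),
    ⟨(p : ℤ) ^ (m - k - e), ((m / p ^ k : ℕ) : ℤ), fun h => hnd (by exact_mod_cast h), by norm_cast⟩, ?_⟩
  have hsum : m - k - e + e + k = m := by omega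
  have hpm : (p : ℚ) ^ m = p ^ (m - k - e) * p ^ e * p ^ k := by
    rw [← pow_add, ← pow_add, hsum]
  have hmcast : (m : ℚ) = (p : ℚ) ^ k * ((m / p ^ k : ℕ) : ℚ) := by
    exact_mod_cast (congrArg (fun x : ℕ => (x : ℚ)) hmm).symm
  rw [hpm, hmcast]
  field_simp

theorem fact_le_one (p : ℕ) (hp : p.Prime) (m : ℕ) (hm : 2 ≤ m) :
    m.factorization p + 1 ≤ m := by
  set k := m.factorization p
  have h1 : p ^ k ≤ m := Nat.ordProj_le p (by omega)
  have h2 : k < 2 ^ k := Nat.lt_two_pow_self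
  have h3 : 2 ^ k ≤ p ^ k := Nat.pow_le_pow_left hp.two_le k
  omega

theorem fact_le_two (p : ℕ) (hp : p.Prime) (m : ℕ) (hm : 2 ≤ m)
    (hne : ¬(p = 2 ∧ m = 2)) : m.factorization p + 2 ≤ m := by
  set k := m.factorization p with hkdef
  have h1 : p ^ k ≤ m := Nat.ordProj_le p (by omega)
  rcases Nat.lt_or_ge k 2 with hk | hk
  · interval_cases k
    · omega
    · have hdvd : p ∣ m := by
        have := Nat.ordProj_dvd m p
        rw [← hkdef] at this
        simpa using this
      rcases eq_or_ne p 2 with rfl | hp2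
      · have h2 : m ≠ 2 := fun h => hne ⟨rfl, h⟩
        have h3 : 2 ∣ m := hdvd
        omega
      · have h4 : 3 ≤ p := by have := hp.two_le; omega
        have h5 : p ≤ m := Nat.le_of_dvd (by omega) hdvd
        omega
  · have h2 : k + 2 ≤ 2 ^ k := two_pow_aux k hk
    have h3 : 2 ^ k ≤ p ^ k := Nat.pow_le_pow_left hp.two_le k
    omega

theorem sum_pow_mod (p : ℕ) (hp : p.Prime) (n : ℕ) (hn : 1 ≤ n) :
    ∃ w : ℤ, (∑ k ∈ range p, (k : ℚ) ^ n) =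
      p * w + (if (p - 1) ∣ n then -1 else 0) := by
  haveI : Fact p.Prime := ⟨hp⟩
  classical
  set c : ℤ := if (p - 1) ∣ n then -1 else 0 with hc
  set S : ℤ := ∑ k ∈ range p, (k : ℤ) ^ n with hS
  have hmod : ((S - c : ℤ) : ZMod p) = 0 := by
    have h1 : ((S : ℤ) : ZMod p) = ∑ k ∈ range p, ((k : ZMod p)) ^ n := by
      rw [hS]; push_cast; rfl
    have h2 : ∑ k ∈ range p, ((k : ZMod p)) ^ n = ∑ x : ZMod p, x ^ n := by
      refine Finset.sum_nbij' (fun k => ((k : ZMod p))) (fun x => x.val) ?_ ?_ ?_ ?_ ?_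
      · intro a _; exact mem_univ _
      · intro a _; exact mem_range.2 (ZMod.val_lt a)
      · intro a ha; exact ZMod.val_cast_of_lt (mem_range.1 ha)
      · intro a _; exact ZMod.natCast_rightInverse a
      · intro a _; rfl
    have h3 : ∑ x : ZMod p, x ^ n = ∑ x : (ZMod p)ˣ, (x : ZMod p) ^ n := by
      let φ : (ZMod p)ˣ ↪ ZMod p := ⟨fun x => x, fun _ _ h => Units.ext h⟩
      have hmap : univ.map φ = univ \ {0} := by
        ext x
        simp only [mem_map, mem_univ, Function.Embedding.coeFn_mk, true_and, mem_sdiff,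
          mem_singleton, φ]
        exact isUnit_iff_ne_zero
      calc ∑ x : ZMod p, x ^ n
          = ∑ x ∈ univ \ {0}, x ^ n := by
            rw [Finset.sum_sdiff_eq_sub (Finset.subset_univ _)]
            simp [zero_pow (by omega : n ≠ 0)]
        _ = ∑ x ∈ univ.map φ, x ^ n := by rw [hmap]
        _ = ∑ x : (ZMod p)ˣ, (x : ZMod p) ^ n := by rw [Finset.sum_map]; rfl
    have h4 : ∑ x : (ZMod p)ˣ, (x : ZMod p) ^ n = if p - 1 ∣ n then -1 else 0 := by
      have := FiniteField.sum_pow_units (ZMod p) n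
      rwa [ZMod.card p] at this
    have h5 : ((c : ℤ) : ZMod p) = if p - 1 ∣ n then -1 else 0 := by
      rw [hc]; split <;> simp
    push_cast
    rw [h1, h2, h3, h4, h5]
    ring
  obtain ⟨w, hw⟩ := (ZMod.intCast_zmod_eq_zero_iff_dvd _ _).1 hmod
  refine ⟨w, ?_⟩
  have hSw : S = p * w + c := by omega
  have : ((S : ℤ) : ℚ) = ((p * w + c : ℤ) : ℚ) := by rw [hSw]
  rw [hS] at this
  push_cast at this
  rw [this, hc]
  split <;> push_cast <;> ring

theorem PI.sub {p : ℕ} (hp : p.Prime) {x y : ℚ} (hx : PI p x) (hy : PI p y) : PI p (x - y) := by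
  rw [sub_eq_add_neg]; exact hx.add hp hy.neg

theorem PI_natCast (p : ℕ) (hp : p ≠ 1) (z : ℕ) : PI p z := by
  have := PI_intCast p hp (z : ℤ)
  simpa using this

theorem PI_zero (p : ℕ) (hp : p ≠ 1) : PI p 0 := by
  simpa using PI_intCast p hp 0

noncomputable def E (p n : ℕ) : ℚ :=
  if (p - 1) ∣ n ∧ (Even n ∨ n = 1) ∧ n ≠ 0 then 1 else 0

theorem bernoulli_PI (p : ℕ) (hp : p.Prime) (n : ℕ) : PI p (bernoulli n + E p n / p) := by
  induction n using Nat.strong_induction_on with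
  | _ n ih =>
  have hp0 : (p : ℚ) ≠ 0 := Nat.cast_ne_zero.2 hp.ne_zero
  rcases Nat.lt_or_ge n 2 with hn2 | hn2
  · interval_cases n
    · have hE : E p 0 = 0 := by simp [E]
      rw [hE, bernoulli_zero]
      simpa using PI_intCast p hp.ne_one 1
    · rcases eq_or_ne p 2 with rfl | hp2
      · have hE : E 2 1 = 1 := by norm_num [E]
        rw [hE, bernoulli_one]
        norm_num
        exact PI_zero 2 (by norm_num)
      · have hE : E p 1 = 0 := by
          have h2 : ¬ (p - 1) ∣ 1 := by
            intro h
            have h3 := Nat.eq_one_of_dvd_one h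
            have := hp.two_le
            exact hp2 (by omega)
          simp [E, h2]
        rw [hE, bernoulli_one]
        refine ⟨-1, 2, ?_, by norm_num⟩
        intro h
        have : (p : ℤ) ∣ 2 := h
        have : p ∣ 2 := by exact_mod_cast this
        have := (Nat.prime_dvd_prime_iff_eq hp Nat.prime_two).1 this
        exact hp2 this
  rcases Nat.even_or_odd n with hev | hodd
  swap
  · -- odd n ≥ 2 : bernoulli n = 0, E = 0
    have hb : bernoulli n = 0 := by
      rw [bernoulli_eq_bernoulli'_of_ne_one (by omega)]
      exact bernoulli'_eq_zero_of_odd hodd (by omega)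
    have hE : E p n = 0 := by
      have h1 : ¬ Even n := Nat.not_even_iff_odd.2 hodd
      rw [E, if_neg]
      rintro ⟨-, h | h, -⟩
      · exact h1 h
      · omega
    rw [hb, hE]
    simpa using PI_zero p hp.ne_one
  -- main case : n even, n ≥ 2
  have hn0 : n ≠ 0 := by omega
  have hEn : E p n = if (p - 1) ∣ n then 1 else 0 := by
    simp [E, hev, hn0]
  -- Faulhaber
  have hfaul := sum_range_pow p n
  set f : ℕ → ℚ := fun j => bernoulli j * (n.choose j : ℚ) * (p : ℚ) ^ (n + 1 - j) / ((n + 1 - j : ℕ) : ℚ) with hf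
  have hterm : ∀ j ∈ range (n + 1),
      bernoulli j * (((n + 1).choose j : ℕ) : ℚ) * (p : ℚ) ^ (n + 1 - j) / ((n : ℚ) + 1) = f j := by
    intro j hj
    have hjn : j ≤ n := by simpa [Nat.lt_succ_iff] using hj
    have hm1 : 1 ≤ n + 1 - j := by omega
    have hkey : (n.choose j : ℚ) * ((n : ℚ) + 1) = (((n + 1).choose j : ℕ) : ℚ) * ((n + 1 - j : ℕ) : ℚ) := by
      have := congrArg (fun x : ℕ => (x : ℚ)) (Nat.choose_mul_succ_eq n j)
      push_cast at this
      convert this using 2 <;> push_cast <;> ring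
    have hm0 : ((n + 1 - j : ℕ) : ℚ) ≠ 0 := by
      have : n + 1 - j ≠ 0 := by omega
      exact_mod_cast this
    have hn10 : ((n : ℚ) + 1) ≠ 0 := by positivity
    rw [hf]
    rw [div_eq_div_iff hn10 hm0]
    linear_combination (-(bernoulli j * (p : ℚ) ^ (n + 1 - j))) * hkey
  rw [Finset.sum_congr rfl hterm] at hfaul
  have hfn : f n = bernoulli n * p := by
    simp only [hf]
    have h1 : n + 1 - n = 1 := by omega
    rw [h1]
    simp
  have hsplit : ∑ j ∈ range (n + 1), f j = ∑ j ∈ range n, f j + bernoulli n * p := by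
    rw [Finset.sum_range_succ, hfn]
  obtain ⟨wS, hwS⟩ := sum_pow_mod p hp n (by omega)
  have hterm2 : ∀ j : ℕ, ∃ w, PI p w ∧ (j < n → f j = p * w) := by
    intro j
    by_cases hjn : j < n
    swap
    · exact ⟨0, PI_zero p hp.ne_one, fun h => absurd h hjn⟩
    refine ?_
    set m := n + 1 - j with hmdef
    have hm2 : 2 ≤ m := by omega
    have hu := ih j hjn
    set u := bernoulli j + E p j / p with hu'
    have hbj : bernoulli j = u - E p j / p := by rw [hu']; ring
    have hCpi : PI p ((n.choose j : ℕ) : ℚ) := PI_natCast p hp.ne_one _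
    have hfj : f j = bernoulli j * ((n.choose j : ℕ) : ℚ) * ((p : ℚ) ^ m / ((m : ℕ) : ℚ)) := by
      simp only [hf]
      ring
    by_cases hE : E p j = 0
    · obtain ⟨wA, hwA, hA⟩ := pow_div_m p hp m hm2 1 (fact_le_one p hp m hm2)
      refine ⟨((n.choose j : ℕ) : ℚ) * u * wA, PI.mul hp (PI.mul hp hCpi hu) hwA, fun _ => ?_⟩
      rw [hfj, hA, hbj, hE]
      ring
    · have hE1 : E p j = 1 := by
        unfold E at hE ⊢
        split at hE
        · exact if_pos ‹_›
        · exact absurd rfl hE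
      by_cases hsp : p = 2 ∧ m = 2
      · obtain ⟨hp2, hm2'⟩ := hsp
        have hj' : j = n - 1 := by omega
        have hC : n.choose j = n := by
          rw [hj']
          rw [Nat.choose_symm (by omega : 1 ≤ n), Nat.choose_one_right]
        obtain ⟨t, ht⟩ := hev
        have hnq : (n : ℚ) = 2 * t := by rw [ht]; push_cast; ring
        refine ⟨(n : ℚ) * u - (t : ℚ), PI.sub hp (PI.mul hp (PI_natCast p hp.ne_one n) hu) (PI_natCast p hp.ne_one t), fun _ => ?_⟩
        rw [hfj, hbj, hE1, hC, hp2, hm2']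
        push_cast
        rw [hnq]
        ring
      · obtain ⟨wB, hwB, hB⟩ := pow_div_m p hp m hm2 2 (fact_le_two p hp m hm2 hsp)
        refine ⟨((n.choose j : ℕ) : ℚ) * wB * ((p : ℚ) * u - 1),
          PI.mul hp (PI.mul hp hCpi hwB)
            (PI.sub hp (PI.mul hp (PI_natCast p hp.ne_one p) hu) (PI_natCast p hp.ne_one 1)), fun _ => ?_⟩
        rw [hfj, hB, hbj, hE1]
        field_simp
  choose g hg1 hg2 using hterm2
  have hsum2 : ∑ j ∈ range n, f j = p * ∑ j ∈ range n, g j := by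
    rw [Finset.mul_sum]
    exact Finset.sum_congr rfl (fun j hj => hg2 j (mem_range.1 hj))
  set T := ∑ j ∈ range n, g j with hT
  have hTpi : PI p T := PI.sum hp (fun j _ => hg1 j)
  have h1 : bernoulli n * p = (∑ k ∈ range p, (k : ℚ) ^ n) - p * T := by
    rw [hfaul, hsplit, hsum2]
    ring
  have h2 : (∑ k ∈ range p, (k : ℚ) ^ n) + E p n = p * wS := by
    rw [hwS, hEn]
    split <;> push_cast <;> ring
  have h3 : bernoulli n + E p n / p = ((wS : ℤ) : ℚ) - T := by
    field_simp
    linarith [h1, h2]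
  rw [h3]
  exact PI.sub hp (PI_intCast p hp.ne_one wS) hTpi


/-- **Von Staudt–Clausen (denominator form).** For every `i ≥ 1`, the denominator of the
Bernoulli number `B (2*i)` (in lowest terms) equals the product of all primes `p` with
`(p - 1) ∣ 2*i`; in particular this denominator is squarefree. -/
theorem bernoulli_den_eq_prod_primes (i : ℕ) (hi : 1 ≤ i) :
    (bernoulli (2 * i)).den =
      (∏ p ∈ Finset.filter (fun p => p.Prime ∧ (p - 1) ∣ 2 * i) (Finset.range (2 * i + 2)), p)
    ∧ Squarefree (bernoulli (2 * i)).den := by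
  classical
  set n := 2 * i with hn
  have hn2 : 2 ≤ n := by omega
  have hev : Even n := ⟨i, by omega⟩
  set P : Finset ℕ := Finset.filter (fun p => p.Prime ∧ (p - 1) ∣ n) (Finset.range (n + 2)) with hP
  have hPprime : ∀ q ∈ P, q.Prime := fun q hq => ((mem_filter.1 hq).2).1
  have hPdvd : ∀ q ∈ P, (q - 1) ∣ n := fun q hq => ((mem_filter.1 hq).2).2
  have hPmem : ∀ p : ℕ, p.Prime → (p - 1) ∣ n → p ∈ P := by
    intro p hp hdvd
    refine mem_filter.2 ⟨mem_range.2 ?_, hp, hdvd⟩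
    have h1 : p - 1 ≤ n := Nat.le_of_dvd (by omega) hdvd
    have := hp.two_le
    omega
  have hEn : ∀ p : ℕ, p.Prime → E p n = if (p - 1) ∣ n then 1 else 0 := by
    intro p hp
    by_cases h : (p - 1) ∣ n <;> simp [E, hev, h] <;> omega
  have hone_div : ∀ p q : ℕ, p.Prime → q.Prime → p ≠ q → PI p (1 / (q : ℚ)) := by
    intro p q hp hq hne
    refine ⟨1, (q : ℤ), ?_, by push_cast; ring⟩
    intro h
    have h2 : p ∣ q := by exact_mod_cast h
    exact hne ((Nat.prime_dvd_prime_iff_eq hp hq).1 h2)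
  set x : ℚ := bernoulli n + ∑ q ∈ P, (1 / (q : ℚ)) with hx
  have hxPI : ∀ p : ℕ, p.Prime → PI p x := by
    intro p hp
    have hkey := bernoulli_PI p hp n
    by_cases hdvd : (p - 1) ∣ n
    · have hpP : p ∈ P := hPmem p hp hdvd
      have hE1 : E p n = 1 := by rw [hEn p hp, if_pos hdvd]
      have hsplit : ∑ q ∈ P, (1 / (q : ℚ)) = 1 / (p : ℚ) + ∑ q ∈ P.erase p, (1 / (q : ℚ)) :=
        (Finset.add_sum_erase P _ hpP).symm
      have h2 : x = (bernoulli n + E p n / p) + ∑ q ∈ P.erase p, (1 / (q : ℚ)) := by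
        rw [hx, hsplit, hE1]
        ring
      rw [h2]
      exact PI.add hp hkey (PI.sum hp fun q hq =>
        hone_div p q hp (hPprime q (Finset.mem_of_mem_erase hq))
          (fun h => (Finset.mem_erase.1 hq).1 h.symm))
    · have hE0 : E p n = 0 := by rw [hEn p hp, if_neg hdvd]
      have h2 : x = (bernoulli n + E p n / p) + ∑ q ∈ P, (1 / (q : ℚ)) := by
        rw [hx, hE0]
        ring
      rw [h2]
      exact PI.add hp hkey (PI.sum hp fun q hq => hone_div p q hp (hPprime q hq)
        (fun h => hdvd (by rw [h]; exact hPdvd q hq)))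
  have hden1 : x.den = 1 := by
    by_contra hne
    obtain ⟨p, hp, hpd⟩ := Nat.exists_prime_and_dvd hne
    exact (PI_iff_not_dvd_den hp x).1 (hxPI p hp) hpd
  have hxnum : ((x.num : ℤ) : ℚ) = x := (Rat.den_eq_one_iff x).1 hden1
  set D : ℕ := ∏ q ∈ P, q with hD
  have hD0 : 0 < D := Finset.prod_pos fun q hq => (hPprime q hq).pos
  have hDq : ∀ q ∈ P, ((D : ℚ)) = (q : ℚ) * ((∏ r ∈ P.erase q, r : ℕ) : ℚ) := by
    intro q hq
    rw [hD]
    exact_mod_cast congrArg (fun m : ℕ => (m : ℚ)) (Finset.mul_prod_erase P _ hq).symm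
  set N : ℕ := ∑ q ∈ P, ∏ r ∈ P.erase q, r with hN
  have hsumN : ∑ q ∈ P, (1 / (q : ℚ)) = (N : ℚ) / (D : ℚ) := by
    rw [hN, Nat.cast_sum, Finset.sum_div]
    refine Finset.sum_congr rfl fun q hq => ?_
    have hq0 : (q : ℚ) ≠ 0 := Nat.cast_ne_zero.2 (hPprime q hq).ne_zero
    have hE0 : ((∏ r ∈ P.erase q, r : ℕ) : ℚ) ≠ 0 := by
      refine Nat.cast_ne_zero.2 (Finset.prod_ne_zero_iff.2 fun r hr => ?_)
      exact (hPprime r (Finset.mem_of_mem_erase hr)).ne_zero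
    rw [hDq q hq, eq_div_iff (mul_ne_zero hq0 hE0)]
    field_simp
  set M : ℤ := x.num * D - N with hM
  have hbern : bernoulli n = (M : ℚ) / (D : ℚ) := by
    have hD0' : ((D : ℕ) : ℚ) ≠ 0 := Nat.cast_ne_zero.2 hD0.ne'
    have h1 : bernoulli n = ((x.num : ℤ) : ℚ) - ∑ q ∈ P, (1 / (q : ℚ)) := by
      rw [hxnum, hx]; ring
    rw [h1, hsumN, hM]
    push_cast
    field_simp
  have hprimeD : ∀ p : ℕ, p.Prime → p ∣ D → p ∈ P := by
    intro p hp hpd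
    rw [hD] at hpd
    obtain ⟨q, hq, hpq⟩ := (Prime.dvd_finset_prod_iff hp.prime _).1 hpd
    rwa [(Nat.prime_dvd_prime_iff_eq hp (hPprime q hq)).1 hpq]
  have hnotdvdN : ∀ p ∈ P, ¬ p ∣ N := by
    intro p hpP hdvd
    rw [hN, ← Finset.add_sum_erase P _ hpP] at hdvd
    have h1 : p ∣ ∑ q ∈ P.erase p, ∏ r ∈ P.erase q, r := by
      refine Finset.dvd_sum fun q hq => Finset.dvd_prod_of_mem _ ?_
      exact Finset.mem_erase.2 ⟨fun h => (Finset.mem_erase.1 hq).1 h.symm, hpP⟩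
    have h2 : p ∣ ∏ r ∈ P.erase p, r := (Nat.dvd_add_right h1).mp (by rwa [Nat.add_comm] at hdvd)
    obtain ⟨r, hr, hpr⟩ := (Prime.dvd_finset_prod_iff (hPprime p hpP).prime _).1 h2
    have := (Nat.prime_dvd_prime_iff_eq (hPprime p hpP) (hPprime r (Finset.mem_of_mem_erase hr))).1 hpr
    exact (Finset.mem_erase.1 hr).1 this.symm
  have hcop : Nat.Coprime M.natAbs D := by
    by_contra hne
    obtain ⟨p, hp, hpd⟩ := Nat.exists_prime_and_dvd hne
    have hpD : p ∣ D := hpd.trans (Nat.gcd_dvd_right _ _)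
    have hpM : (p : ℤ) ∣ M :=
      Int.dvd_natAbs.1 (Int.natCast_dvd_natCast.2 (hpd.trans (Nat.gcd_dvd_left _ _)))
    have hpP : p ∈ P := hprimeD p hp hpD
    have hpN : (p : ℤ) ∣ (N : ℤ) := by
      have h1 : (p : ℤ) ∣ x.num * D := Dvd.dvd.mul_left (Int.natCast_dvd_natCast.2 hpD) _
      have := dvd_sub h1 hpM
      simpa [hM] using this
    exact hnotdvdN p hpP (Int.natCast_dvd_natCast.1 hpN)
  have hdenD : (bernoulli n).den = D := by
    rw [hbern]
    have h := Rat.den_div_eq_of_coprime (a := M) (b := (D : ℤ)) (by exact_mod_cast hD0) (by simpa using hcop)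
    push_cast at h
    simpa using h
  have hsq : Squarefree D := by
    rw [Nat.squarefree_iff_prime_squarefree]
    intro p hp hdvd
    have hp' : p.Prime := by
      first
      | exact hp
      | exact Nat.prime_iff.2 hp
    have hpD : p ∣ D := (dvd_mul_right p p).trans hdvd
    have hpP : p ∈ P := hprimeD p hp' hpD
    have hDe : D = p * ∏ r ∈ P.erase p, r := (Finset.mul_prod_erase P _ hpP).symm
    rw [hDe] at hdvd
    have h2 : p ∣ ∏ r ∈ P.erase p, r := (Nat.mul_dvd_mul_iff_left hp'.pos).1 hdvd
    obtain ⟨r, hr, hpr⟩ := (Prime.dvd_finset_prod_iff hp'.prime _).1 h2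
    have := (Nat.prime_dvd_prime_iff_eq hp' (hPprime r (Finset.mem_of_mem_erase hr))).1 hpr
    exact (Finset.mem_erase.1 hr).1 this.symm
  exact ⟨hdenD, hdenD ▸ hsq⟩
end

section
/- For every integer i ≥ 1, ν_2(1 − (−5)^{2i}) = 1 + ν_2(den(B_{2i}/(2i))); that is, the 2-adic valuation of the integer 1 − 5^{2i} exceeds the 2-adic valuation of the denominator of B_{2i}/(2i) by exactly one. -/
open Finset

private lemma val_sum_aux (s : Finset ℕ) (F : ℕ → ℚ)
    (h : ∀ j ∈ s, F j = 0 ∨ 1 ≤ padicValRat 2 (F j)) :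
    (∑ j ∈ s, F j) = 0 ∨ 1 ≤ padicValRat 2 (∑ j ∈ s, F j) := by
  classical
  induction s using Finset.induction_on with
  | empty => simp
  | @insert a s hx ih =>
    rw [Finset.sum_insert hx]
    have ha := h a (Finset.mem_insert_self a s)
    have hs := ih (fun j hj => h j (Finset.mem_insert_of_mem hj))
    rcases ha with ha | ha
    · simpa [ha] using hs
    · rcases hs with hs | hs
      · rw [hs, add_zero]; exact Or.inr ha
      · by_cases hz : F a + ∑ j ∈ s, F j = 0
        · exact Or.inl hz
        · right
          calc (1 : ℤ) ≤ min (padicValRat 2 (F a)) (padicValRat 2 (∑ j ∈ s, F j)) :=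
                le_min ha hs
            _ ≤ _ := padicValRat.min_le_padicValRat_add hz


private lemma padic_two_val : padicValRat 2 (2 : ℚ) = 1 := by
  have h := padicValRat.self (p := 2) one_lt_two
  norm_num at h
  exact h

private lemma bern_val : ∀ n : ℕ, Even n → 2 ≤ n → padicValRat 2 (bernoulli n) = -1 := by
  intro n
  induction n using Nat.strong_induction_on with
  | _ n IH =>
    intro hev hn2
    have hodd : ¬ (2 : ℕ) ∣ (n + 1) := by
      rcases hev with ⟨k, hk⟩; omega
    have hn1 : (((n + 1 : ℕ) : ℚ)) ≠ 0 := by positivity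
    set F : ℕ → ℚ := fun j =>
      bernoulli j * ((n + 1).choose j) * (2 : ℚ) ^ (n + 1 - j) / ((n + 1 : ℕ) : ℚ) with hF
    have hfaul : (1 : ℚ) = ∑ j ∈ range (n + 1), F j := by
      have h := sum_range_pow 2 n
      have h01 : (∑ k ∈ range 2, (k : ℚ) ^ n) = 1 := by
        rw [Finset.sum_range_succ, Finset.sum_range_one]
        have h0 : (0 : ℚ) ^ n = 0 := by apply zero_pow; omega
        simp [h0]
      rw [h01] at h
      rw [h, hF]
      apply Finset.sum_congr rfl
      intro j hj
      push_cast
      norm_num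
    have hFn : F n = 2 * bernoulli n := by
      have hc : ((n + 1).choose n : ℚ) = ((n + 1 : ℕ) : ℚ) := by
        rw [Nat.choose_succ_self_right]
      have hnn : n + 1 - n = 1 := by omega
      rw [hF]
      simp only [hnn, hc, pow_one]
      field_simp
    have hsplit : (1 : ℚ) = (∑ j ∈ range n, F j) + 2 * bernoulli n := by
      rw [hfaul, Finset.sum_range_succ, hFn]
    have hvn1 : padicValRat 2 (((n + 1 : ℕ) : ℚ)) = 0 := by
      rw [← padicValRat_of_nat, padicValNat.eq_zero_of_not_dvd hodd]
      simp
    -- each term of the error sum is 0 or has valuation ≥ 1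
    have hterm : ∀ j ∈ range n, F j = 0 ∨ 1 ≤ padicValRat 2 (F j) := by
      intro j hj
      rw [Finset.mem_range] at hj
      by_cases hbz : bernoulli j = 0
      · left; simp [hF, hbz]
      · right
        have hjle : j ≤ n + 1 := by omega
        have hcpos : 0 < (n + 1).choose j := Nat.choose_pos hjle
        have hcne : (((n + 1).choose j : ℕ) : ℚ) ≠ 0 := by positivity
        have h2ne : ((2 : ℚ) ^ (n + 1 - j)) ≠ 0 := by positivity
        have hval : padicValRat 2 (F j) =
            padicValRat 2 (bernoulli j) + padicValRat 2 ((((n + 1).choose j : ℕ)) : ℚ)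
              + ((n + 1 - j : ℕ) : ℤ) := by
          rw [hF]
          simp only
          rw [padicValRat.div (by exact mul_ne_zero (mul_ne_zero hbz hcne) h2ne) hn1,
            padicValRat.mul (mul_ne_zero hbz hcne) h2ne,
            padicValRat.mul hbz hcne, hvn1,
            padicValRat.pow (2 : ℚ),
            padic_two_val]
          ring
        have hb1 : -1 ≤ padicValRat 2 (bernoulli j) := by
          rcases Nat.even_or_odd j with hje | hjo
          · rcases Nat.eq_zero_or_pos j with rfl | hjp
            · simp [bernoulli_zero]
            · have : 2 ≤ j := by
                rcases hje with ⟨k, hk⟩; omega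
              rw [IH j hj hje this]
          · rcases Nat.lt_or_ge j 2 with hj2 | hj2
            · have : j = 1 := by rcases hjo with ⟨k, hk⟩; omega
              subst this
              rw [bernoulli_one]
              have : (-1/2 : ℚ) = -(2 : ℚ)⁻¹ := by norm_num
              rw [this, padicValRat.neg, padicValRat.inv, padic_two_val]
            · exfalso
              apply hbz
              rw [bernoulli_eq_bernoulli'_of_ne_one (by omega)]
              exact bernoulli'_eq_zero_of_odd hjo (by omega)
        have hc0 : 0 ≤ padicValRat 2 ((((n + 1).choose j : ℕ)) : ℚ) := by
          rw [← padicValRat_of_nat]; positivity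
        have hj2 : 2 ≤ ((n + 1 - j : ℕ) : ℤ) := by omega
        omega
    rcases val_sum_aux (range n) F hterm with hE | hE
    · -- sum is zero, so bernoulli n = 1/2
      have : bernoulli n = 1/2 := by
        rw [hE, zero_add] at hsplit
        linarith
      rw [this]
      have : (1/2 : ℚ) = (2 : ℚ)⁻¹ := by norm_num
      rw [this, padicValRat.inv, padic_two_val]
    · -- sum has positive valuation
      set E := ∑ j ∈ range n, F j with hEdef
      have hEne : E ≠ 0 := by
        intro h0; rw [h0, padicValRat.zero] at hE; omega
      have h2b : 2 * bernoulli n = 1 + (-E) := by linarith [hsplit]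
      have hEne1 : 1 + (-E) ≠ 0 := by
        intro h0
        have : E = 1 := by linarith
        rw [this, padicValRat.one] at hE; omega
      have hval0 : padicValRat 2 (2 * bernoulli n) = 0 := by
        rw [h2b, padicValRat.add_eq_of_lt hEne1 one_ne_zero (by simpa using hEne)]
        · exact padicValRat.one
        · rw [padicValRat.one, padicValRat.neg]; omega
      have hbne : bernoulli n ≠ 0 := by
        intro h0; rw [h0, mul_zero, padicValRat.zero] at hval0
        rw [h0] at h2b
        exact hEne1 (by linarith)
      rw [padicValRat.mul two_ne_zero hbne, padic_two_val] at hval0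
      omega

/-- For every `i ≥ 1`, the 2-adic valuation of `1 - (-5)^(2*i)` exceeds the 2-adic valuation
of the denominator of `B (2*i) / (2*i)` by exactly one. -/
theorem padicValInt_two_eq_one_add (i : ℕ) (hi : 1 ≤ i) :
    padicValInt 2 (1 - (-5 : ℤ) ^ (2 * i)) =
      1 + padicValNat 2 (bernoulli (2 * i) / (2 * i : ℚ)).den := by
  have hine : i ≠ 0 := by omega
  set d := padicValNat 2 i with hd
  -- LHS
  have hLeq : (1 : ℤ) - (-5 : ℤ) ^ (2 * i) = -(((5 ^ (2 * i) - 1 ^ (2 * i) : ℕ) : ℤ)) := by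
    have he : Even (2 * i) := ⟨i, by ring⟩
    have h1 : (1 : ℕ) ≤ 5 ^ (2 * i) := Nat.one_le_pow _ _ (by norm_num)
    rw [he.neg_pow, one_pow, Nat.cast_sub h1]
    push_cast
    ring
  have hvi : padicValNat 2 (2 * i) = 1 + d := by
    rw [padicValNat.mul (by norm_num) hine, padicValNat_self]
  have hlte : padicValNat 2 (5 ^ (2 * i) - 1 ^ (2 * i)) + 1 =
      padicValNat 2 (5 + 1) + padicValNat 2 (5 - 1) + padicValNat 2 (2 * i) :=
    padicValNat.pow_two_sub_pow (x := 5) (y := 1) (by norm_num) (by norm_num) (by norm_num)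
      (by omega) ⟨i, by ring⟩
  have h6 : padicValNat 2 (5 + 1) = 1 := by
    have : (5 + 1 : ℕ) = 2 * 3 := by norm_num
    rw [this, padicValNat.mul (by norm_num) (by norm_num), padicValNat_self,
      padicValNat.eq_zero_of_not_dvd (by norm_num)]
  have h4 : padicValNat 2 (5 - 1) = 2 := by
    have : (5 - 1 : ℕ) = 2 ^ 2 := by norm_num
    rw [this, padicValNat.prime_pow]
  have hL : padicValInt 2 (1 - (-5 : ℤ) ^ (2 * i)) = 3 + d := by
    rw [hLeq]
    unfold padicValInt
    rw [Int.natAbs_neg, Int.natAbs_natCast]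
    omega
  -- RHS
  set q : ℚ := bernoulli (2 * i) / (2 * i : ℚ) with hq
  have hbv : padicValRat 2 (bernoulli (2 * i)) = -1 :=
    bern_val (2 * i) ⟨i, by ring⟩ (by omega)
  have hbne : bernoulli (2 * i) ≠ 0 := by
    intro h0; rw [h0, padicValRat.zero] at hbv; omega
  have h2ine : ((2 * i : ℕ) : ℚ) ≠ 0 := by positivity
  have hcast : (2 * i : ℚ) = ((2 * i : ℕ) : ℚ) := by push_cast; ring
  have hqne : q ≠ 0 := by
    rw [hq, hcast]
    exact div_ne_zero hbne h2ine
  have hvq : padicValRat 2 q = -2 - (d : ℤ) := by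
    rw [hq, hcast, padicValRat.div hbne h2ine, hbv, ← padicValRat_of_nat, hvi]
    push_cast
    ring
  have hnumne : q.num ≠ 0 := Rat.num_ne_zero.2 hqne
  have hdpos : 0 < padicValNat 2 q.den := by
    by_contra h
    have h0 : padicValNat 2 q.den = 0 := by omega
    rw [padicValRat_def, h0] at hvq
    omega
  have hden2 : 2 ∣ q.den := by
    by_contra h
    rw [padicValNat.eq_zero_of_not_dvd h] at hdpos
    omega
  have hnum0 : padicValInt 2 q.num = 0 := by
    unfold padicValInt
    apply padicValNat.eq_zero_of_not_dvd
    intro h2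
    have h12 : (2 : ℕ) ∣ Nat.gcd q.num.natAbs q.den := Nat.dvd_gcd h2 hden2
    rw [q.reduced] at h12
    omega
  have hR : padicValNat 2 q.den = 2 + d := by
    rw [padicValRat_def, hnum0] at hvq
    omega
  rw [hL, hR]
  omega
end

section
/- Let q ≥ 1 be an integer, let p_0, p_1, …, p_k be distinct complex numbers, and let n_0, n_1, …, n_k be positive integers with gcd(q, n_i) = 1 for every i. Let f = ∏_{i=0}^{k} (z − p_i)^{n_i}, regarded as an element of the field ℂ(z) of rational functions over ℂ. Then the polynomial T^q − f is irreducible over ℂ(z). -/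
open Polynomial

noncomputable section

private abbrev KK := RatFunc ℂ

private lemma exists_poly' (x : KK) (F : Polynomial ℂ) (e : ℕ) (he : e ≠ 0)
    (h : x ^ e = algebraMap (Polynomial ℂ) KK F) :
    ∃ G : Polynomial ℂ, algebraMap (Polynomial ℂ) KK G = x := by
  have hint : IsIntegral (Polynomial ℂ) x := by
    refine ⟨X ^ e - C F, monic_X_pow_sub_C F he, ?_⟩
    simp [eval₂_sub, eval₂_pow, h]
  exact IsIntegrallyClosed.isIntegral_iff.mp hint

private lemma root_of_unity_const' (ω : KK) (e : ℕ) (he : e ≠ 0) (h : ω ^ e = 1) :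
    ∃ c : ℂ, ω = RatFunc.C c := by
  obtain ⟨G, hG⟩ := exists_poly' ω 1 e he (by simp [h])
  have hG1 : G ^ e = 1 := by
    apply IsFractionRing.injective (Polynomial ℂ) KK
    simp [map_pow, hG, h]
  have : IsUnit G := IsUnit.of_mul_eq_one (a := G) (G ^ (e - 1)) (by
    rw [← pow_succ', Nat.sub_add_cancel (Nat.one_le_iff_ne_zero.mpr he), hG1])
  obtain ⟨c, -, hc⟩ := Polynomial.isUnit_iff.mp this
  exact ⟨c, by rw [← hG, ← hc, RatFunc.algebraMap_C]⟩

private lemma rootMult_pow' (x : ℂ) (G : Polynomial ℂ) (hG : G ≠ 0) (m : ℕ) :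
    rootMultiplicity x (G ^ m) = m * rootMultiplicity x G := by
  induction m with
  | zero => simp
  | succ k ih =>
    rw [pow_succ, rootMultiplicity_mul (mul_ne_zero (pow_ne_zero _ hG) hG), ih]
    ring

private theorem myKummer' {q : ℕ} (hq : 0 < q) {a : KK} (ha0 : a ≠ 0)
    (ha : ∀ p : ℕ, p.Prime → p ∣ q → ∀ b : KK, b ^ p ≠ a) :
    Irreducible (X ^ q - C a) := by
  have hnu : ¬ IsUnit (X ^ q - C a : Polynomial KK) := by
    rw [Polynomial.isUnit_iff_degree_eq_zero, degree_X_pow_sub_C hq, Nat.cast_eq_zero]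
    exact hq.ne'
  have ⟨g, hg, hg'⟩ := WfDvdMonoid.exists_irreducible_factor hnu (X_pow_sub_C_ne_zero hq a)
  suffices natDegree g = q from (associated_of_dvd_of_natDegree_le hg'
    (X_pow_sub_C_ne_zero hq a) (this.trans natDegree_X_pow_sub_C.symm).ge).irreducible hg
  have : Fact (Irreducible g) := ⟨hg⟩
  set d := natDegree g with hd
  have key : (Algebra.norm KK (AdjoinRoot.root g)) ^ q = a ^ d := by
    have := Polynomial.eval₂_eq_zero_of_dvd_of_eval₂_eq_zero _ _ hg' (AdjoinRoot.eval₂_root g)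
    rw [eval₂_sub, eval₂_pow, eval₂_C, eval₂_X, sub_eq_zero] at this
    rw [← map_pow, this, ← AdjoinRoot.algebraMap_eq, Algebra.norm_algebraMap,
      ← IntermediateField.finrank_top', ← IntermediateField.adjoin_root_eq_top g,
      IntermediateField.adjoin.finrank,
      AdjoinRoot.minpoly_root hg.ne_zero, natDegree_mul_C]
    · simpa using hg.ne_zero
    · exact AdjoinRoot.isIntegral_root hg.ne_zero
  set N := Algebra.norm KK (AdjoinRoot.root g) with hN
  have hd1 : 0 < d := natDegree_pos_iff_degree_pos.mpr (degree_pos_of_irreducible hg)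
  have hdq : d ≤ q := (natDegree_le_of_dvd hg' (X_pow_sub_C_ne_zero hq a)).trans_eq
    natDegree_X_pow_sub_C
  set e := Nat.gcd d q with he
  have he0 : 0 < e := Nat.gcd_pos_of_pos_left q hd1
  set q' := q / e with hq'
  set d' := d / e with hd'
  have heq : e * q' = q := Nat.mul_div_cancel' (Nat.gcd_dvd_right d q)
  have hed : e * d' = d := Nat.mul_div_cancel' (Nat.gcd_dvd_left d q)
  have hq'0 : 0 < q' := Nat.pos_of_ne_zero (by rintro h; rw [h, mul_zero] at heq; omega)
  have hN0 : N ≠ 0 := by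
    intro h
    rw [h, zero_pow hq.ne'] at key
    exact ha0 (pow_eq_zero_iff hd1.ne' |>.mp key.symm)
  have hq'1 : q' = 1 := by
    by_contra hne
    have hp : (q'.minFac).Prime := Nat.minFac_prime hne
    have hpq : q'.minFac ∣ q := (Nat.minFac_dvd q').trans ⟨e, by rw [← heq, mul_comm]⟩
    have hxy : (N ^ q') ^ e = (a ^ d') ^ e := by
      rw [← pow_mul, ← pow_mul, mul_comm q' e, mul_comm d' e, heq, hed, key]
    have hy0 : a ^ d' ≠ 0 := pow_ne_zero _ ha0
    have hω : (N ^ q' * (a ^ d')⁻¹) ^ e = 1 := by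
      rw [mul_pow, hxy, inv_pow, mul_inv_cancel₀ (pow_ne_zero _ hy0)]
    obtain ⟨c, hc⟩ := root_of_unity_const' _ e he0.ne' hω
    have hc0 : c ≠ 0 := by
      rintro rfl
      simp only [map_zero] at hc
      exact (mul_ne_zero (pow_ne_zero _ hN0) (inv_ne_zero hy0)) hc
    obtain ⟨η, hη⟩ := IsAlgClosed.exists_pow_nat_eq c hq'0
    have hη0' : η ≠ 0 := fun h ↦ hc0 (by rw [← hη, h, zero_pow hq'0.ne'])
    have hη0 : (RatFunc.C η : KK) ≠ 0 := fun h ↦ hη0' ((_root_.map_eq_zero _).mp h)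
    have hmem : a ^ d' ∈ Set.range (· ^ q' : KK → KK) := by
      refine ⟨N * (RatFunc.C η)⁻¹, ?_⟩
      have hCη : (RatFunc.C η : KK) ^ q' = RatFunc.C c := by rw [← map_pow, hη]
      have : N ^ q' = RatFunc.C c * a ^ d' := by
        field_simp at hc
        linear_combination hc
      simp only
      rw [mul_pow, inv_pow, hCη, this, mul_comm (RatFunc.C c), mul_assoc,
        mul_inv_cancel₀ (fun h ↦ hc0 ((_root_.map_eq_zero _).mp h)), mul_one]
    have hcop : Nat.Coprime d' q' := Nat.coprime_div_gcd_div_gcd he0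
    obtain ⟨b, hb⟩ := (pow_mem_range_pow_of_coprime hcop a).mp hmem
    refine ha q'.minFac hp hpq (b ^ (q' / q'.minFac)) ?_
    rw [← pow_mul, Nat.div_mul_cancel (Nat.minFac_dvd q')]
    exact hb
  have heqq : e = q := by rw [← heq, hq'1, mul_one]
  have hqd : q ∣ d := heqq ▸ Nat.gcd_dvd_left d q
  exact Nat.le_antisymm hdq (Nat.le_of_dvd hd1 hqd)

/-- Let `q ≥ 1`, let `p₀, …, p_k` be distinct complex numbers and `n₀, …, n_k` positive
integers with `gcd q nᵢ = 1` for all `i`. With `f = ∏ i, (z - pᵢ)^(nᵢ) ∈ ℂ(z)`, the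
polynomial `T^q - f` is irreducible over `ℂ(z)`. -/
theorem X_pow_sub_C_prod_irreducible (q k : ℕ) (hq : 1 ≤ q)
    (p : Fin (k + 1) → ℂ) (hp : Function.Injective p)
    (n : Fin (k + 1) → ℕ) (hn : ∀ i, 0 < n i) (hgcd : ∀ i, Nat.gcd q (n i) = 1)
    (f : RatFunc ℂ) (hf : f = ∏ i, (RatFunc.X - RatFunc.C (p i)) ^ (n i)) :
    Irreducible (Polynomial.X ^ q - Polynomial.C f) := by
  set F : Polynomial ℂ := ∏ i, (X - C (p i)) ^ (n i) with hF
  have hFf : f = algebraMap (Polynomial ℂ) KK F := by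
    rw [hf, hF, map_prod]
    refine Finset.prod_congr rfl fun i _ ↦ ?_
    rw [map_pow, map_sub, RatFunc.algebraMap_X, RatFunc.algebraMap_C]
  have hF0 : F ≠ 0 := by
    rw [hF]
    exact Finset.prod_ne_zero_iff.mpr fun i _ ↦ pow_ne_zero _ (X_sub_C_ne_zero (p i))
  have hf0 : f ≠ 0 := by
    rw [hFf]
    simpa using hF0
  refine myKummer' hq hf0 fun pr hpr hprq b hb ↦ ?_
  obtain ⟨G, hG⟩ := exists_poly' b F pr hpr.ne_zero (by rw [hb, hFf])
  have hGP : G ^ pr = F := by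
    apply IsFractionRing.injective (Polynomial ℂ) KK
    rw [map_pow, hG, hb, hFf]
  have hG0 : G ≠ 0 := by
    rintro rfl
    rw [zero_pow hpr.ne_zero] at hGP
    exact hF0 hGP.symm
  have hrm : rootMultiplicity (p 0) F = n 0 := by
    have hsplit : F = (X - C (p 0)) ^ (n 0) *
        ∏ i ∈ Finset.univ.erase 0, (X - C (p i)) ^ (n i) :=
      (Finset.mul_prod_erase Finset.univ _ (Finset.mem_univ 0)).symm
    have hR0 : (∏ i ∈ Finset.univ.erase 0, (X - C (p i)) ^ (n i) : Polynomial ℂ) ≠ 0 :=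
      Finset.prod_ne_zero_iff.mpr fun i _ ↦ pow_ne_zero _ (X_sub_C_ne_zero (p i))
    rw [hsplit, rootMultiplicity_mul (by rw [← hsplit]; exact hF0),
      rootMultiplicity_X_sub_C_pow, rootMultiplicity_eq_zero, add_zero]
    simp only [IsRoot, eval_prod, eval_pow, eval_sub, eval_X, eval_C]
    rw [Finset.prod_eq_zero_iff]
    rintro ⟨i, hi, hzero⟩
    have : p 0 - p i = 0 := pow_eq_zero_iff (hn i).ne' |>.mp hzero
    have : i = 0 := hp (by linear_combination -this)
    exact (Finset.mem_erase.mp hi).1 this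
  have hdvd : pr ∣ n 0 := by
    refine ⟨rootMultiplicity (p 0) G, ?_⟩
    rw [← hrm, ← hGP, rootMult_pow' _ _ hG0]
  have : pr ∣ 1 := (hgcd 0) ▸ Nat.dvd_gcd hprq hdvd
  exact hpr.one_lt.ne' (Nat.dvd_one.mp this)
end
end
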